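/- arXiv:1408.4364 — 2 statements merged into one kernel-verified Lean document; each statement's English description precedes it below -/
import Mathlib

section
/- Let 𝒫 be a class of subsets of a finite set V with the property: whenever A, B ∈ 𝒫, |A| = |B|, and |A ∩ B| = |A| − 1, then A ∩ B ∈ 𝒫. Then the complement class 𝒮 = 2^V \ 𝒫 satisfies the exchange property: for any A, B ∈ 𝒮 with |A| > |B|, there exists a ∈ A \ B with B ∪ {a} ∈ 𝒮. -/
open Finset

/-- Let `Pfam` be a class of subsets of a finite set `V` closed under
intersections of pairs of equal-cardinality sets whose intersection has one fewer
element.  Then `𝒮 = 2^V \ Pfam` satisfies the exchange property: for `A, B ∈ 𝒮` with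
`|A| > |B|` there is `a ∈ A \ B` with `B ∪ {a} ∉ 𝒮`. -/
theorem complement_exchange {V : Type*} [Fintype V] [DecidableEq V]
    (Pfam : Set (Finset V))
    (hP : ∀ A B : Finset V, A ∈ Pfam → B ∈ Pfam → A.card = B.card →
      (A ∩ B).card = A.card - 1 → A ∩ B ∈ Pfam)
    (A B : Finset V) (hA : A ∉ Pfam) (hB : B ∉ Pfam) (hcard : B.card < A.card) :
    ∃ a ∈ A \ B, insert a B ∉ Pfam := by
  by_contra h
  push_neg at h
  have hne : (A \ B).Nonempty := by
    rw [sdiff_nonempty]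
    intro hsub
    exact absurd (card_le_card hsub) (not_le.mpr hcard)
  rcases lt_or_ge 1 (A \ B).card with h2 | h1
  · obtain ⟨a, ha, a', ha', hne'⟩ := one_lt_card.mp h2
    have haB : a ∉ B := (mem_sdiff.mp ha).2
    have ha'B : a' ∉ B := (mem_sdiff.mp ha').2
    have hSa := h a ha
    have hSa' := h a' ha'
    have hcards : (insert a B).card = (insert a' B).card := by
      rw [card_insert_of_notMem haB, card_insert_of_notMem ha'B]
    have hinter : insert a B ∩ insert a' B = B := by
      ext x
      simp only [mem_inter, mem_insert]
      constructor
      · rintro ⟨hx | hx, hx' | hx'⟩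
        · exact absurd (hx.symm.trans hx') hne'
        · exact hx'
        · exact hx
        · exact hx
      · intro hx; exact ⟨Or.inr hx, Or.inr hx⟩
    have := hP _ _ hSa hSa' hcards (by
      rw [hinter, card_insert_of_notMem haB]; simp)
    rw [hinter] at this
    exact hB this
  · have h1' : (A \ B).card = 1 := le_antisymm h1 (card_pos.mpr hne)
    obtain ⟨a, ha⟩ := card_eq_one.mp h1'
    have haA : a ∈ A \ B := ha ▸ mem_singleton_self a
    have hABcard : (A ∩ B).card = B.card := by
      have := card_sdiff_add_card_inter A B
      have hle := card_le_card (inter_subset_right : A ∩ B ⊆ B)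
      rw [h1'] at this
      omega
    have hABeq : A ∩ B = B := eq_of_subset_of_card_le inter_subset_right (le_of_eq hABcard.symm)
    have hAeq : A = insert a B := by
      have : A = (A \ B) ∪ (A ∩ B) := (sdiff_union_inter A B).symm
      rw [ha, hABeq] at this
      rw [this, ← insert_eq]
    exact hA (hAeq ▸ h a haA)
end

section
/- Suppose families ĝ_n (1 ≤ n ≤ m) and Ĝ_n (m ≤ n ≤ K) of subsets of a finite set V satisfy: (T1) ĝ_m = Ĝ_m; (T2) every A ∈ ĝ_n with n ≥ 2 contains some B ∈ ĝ_{n−1}, and every A ∈ ĝ_1 contains ∅; (T3) for every B ∈ ĝ_{n−1} and A ∈ ĝ_n there is p ∈ A \ B with B ∪ {p} ∈ ĝ_n; (T4) for n > m, Ĝ_n consists exactly of sets A with |A| = n containing some B ∈ Ĝ_{n−1}, and moreover for any B ∈ Ĝ_{n-1} and A ∈ Ĝ_n there is p ∈ A\B with B ∪ {p} ∈ Ĝ_n; and all sets in ĝ_n and Ĝ_n have cardinality n. Then the family f_m = {∅} ∪ ĝ_1 ∪ ⋯ ∪ ĝ_m satisfies G1 and G2. -/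
open Finset

/-- Given layered families `ĝ_n` (`1 ≤ n ≤ m`) and `Ĝ_n`
(`m ≤ n ≤ K`) of `n`-element subsets of a finite set `V` satisfying T1–T4, the family
`f_m = {∅} ∪ ĝ_1 ∪ ⋯ ∪ ĝ_m` satisfies the greedoid axioms G1 and G2. -/
theorem layered_family_G1_G2 {V : Type*} [Fintype V] [DecidableEq V]
    (m K : ℕ) (hm : 1 ≤ m) (hmK : m ≤ K)
    (g G : ℕ → Set (Finset V))
    (hgcard : ∀ n, 1 ≤ n → n ≤ m → ∀ A ∈ g n, A.card = n)
    (hGcard : ∀ n, m ≤ n → n ≤ K → ∀ A ∈ G n, A.card = n)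
    (T1 : g m = G m)
    (T2 : (∀ n, 2 ≤ n → n ≤ m → ∀ A ∈ g n, ∃ B ∈ g (n - 1), B ⊆ A) ∧
      ∀ A ∈ g 1, (∅ : Finset V) ⊆ A)
    (T3 : ∀ n, 2 ≤ n → n ≤ m → ∀ B ∈ g (n - 1), ∀ A ∈ g n,
      ∃ p ∈ A, p ∉ B ∧ insert p B ∈ g n)
    (T4 : ∀ n, m < n → n ≤ K →
      (G n = {A : Finset V | A.card = n ∧ ∃ B ∈ G (n - 1), B ⊆ A}) ∧
      ∀ B ∈ G (n - 1), ∀ A ∈ G n, ∃ p ∈ A, p ∉ B ∧ insert p B ∈ G n) :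
    (∅ : Finset V) ∈ ({∅} ∪ ⋃ n ∈ Set.Icc 1 m, g n : Set (Finset V)) ∧
      ∀ A ∈ ({∅} ∪ ⋃ n ∈ Set.Icc 1 m, g n : Set (Finset V)), A ≠ ∅ →
        ∃ a ∈ A, A.erase a ∈ ({∅} ∪ ⋃ n ∈ Set.Icc 1 m, g n : Set (Finset V)) := by
  constructor
  · exact Or.inl rfl
  · rintro A hA hAne
    rcases hA with hA | hA
    · exact absurd hA hAne
    · simp only [Set.mem_iUnion, Set.mem_Icc] at hA
      obtain ⟨n, ⟨hn1, hnm⟩, hAn⟩ := hA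
      have hcard : A.card = n := hgcard n hn1 hnm A hAn
      rcases Nat.lt_or_ge n 2 with h2 | h2
      · -- n = 1, erase any element gives ∅
        interval_cases n
        obtain ⟨a, ha⟩ := Finset.card_eq_one.mp hcard
        refine ⟨a, ?_, ?_⟩
        · simp [ha]
        · left
          simp [ha]
      · obtain ⟨B, hB, hBA⟩ := T2.1 n h2 hnm A hAn
        have hBcard : B.card = n - 1 := by
          have h1 : 1 ≤ n - 1 := by omega
          have h2' : n - 1 ≤ m := by omega
          exact hgcard (n - 1) h1 h2' B hB
        -- A \ B has exactly one element
        have hsd : (A \ B).card = 1 := by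
          rw [Finset.card_sdiff_of_subset hBA, hcard, hBcard]; omega
        obtain ⟨a, ha⟩ := Finset.card_eq_one.mp hsd
        have haA : a ∈ A := by
          have : a ∈ A \ B := by rw [ha]; exact Finset.mem_singleton_self a
          exact (Finset.mem_sdiff.mp this).1
        refine ⟨a, haA, ?_⟩
        have hErase : A.erase a = B := by
          apply Finset.eq_of_subset_of_card_le
          · intro x hx
            rw [Finset.mem_erase] at hx
            by_contra hxB
            have : x ∈ A \ B := Finset.mem_sdiff.mpr ⟨hx.2, hxB⟩
            rw [ha, Finset.mem_singleton] at this
            exact hx.1 this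
          · rw [Finset.card_erase_of_mem haA, hcard, hBcard]
        right
        simp only [Set.mem_iUnion, Set.mem_Icc]
        exact ⟨n - 1, ⟨by omega, by omega⟩, hErase ▸ hB⟩
end
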